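/- Let p ≥ 3, let ε₁, …, εₙ be i.i.d. Rademacher random variables, and let a₁, …, aₙ, b₁, …, bₙ be real numbers with ∑_{i=1}^n aᵢ² = ∑_{i=1}^n bᵢ² = 1 such that the vector (a₁², …, aₙ²) is majorized by (b₁², …, bₙ²) in the Schur order. Then E|∑_{i=1}^n bᵢεᵢ|^p ≤ E|∑_{i=1}^n aᵢεᵢ|^p. -/

import Mathlib

open MeasureTheory ProbabilityTheory Real Filter

/-- The law of a Rademacher random variable: `±1` with probability `1/2` each. -/
noncomputable def rademacherLaw : Measure ℝ :=
  ((1 : ENNReal) / 2) • Measure.dirac 1 + ((1 : ENNReal) / 2) • Measure.dirac (-1)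

/-- `x` is majorized by `y` in the Schur order: for every `k`, the sum of the `k` largest
coordinates of `x` is at most the sum of the `k` largest coordinates of `y`.  This is
expressed equivalently as: every partial sum of `x` over a set `A` is dominated by some
partial sum of `y` over a set of the same cardinality. -/
def IsMajorizedBy {n : ℕ} (x y : Fin n → ℝ) : Prop :=
  ∀ A : Finset (Fin n), ∃ B : Finset (Fin n),
    B.card = A.card ∧ ∑ i ∈ A, x i ≤ ∑ i ∈ B, y i


/-- Core inequality: `D` is monotone. -/

theorem schur_D_mono (q z : ℝ) (hq : 1 ≤ q) (hz : 0 ≤ z) :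
    MonotoneOn (fun t : ℝ => (z - t) ^ q * (z + q * t) - (z + t) ^ q * (z - q * t))
      (Set.Icc 0 (z / q)) := by
  have hq0 : (0:ℝ) < q := lt_of_lt_of_le one_pos hq
  have hD : ∀ t : ℝ, HasDerivAt (fun t : ℝ => (z - t) ^ q * (z + q * t) - (z + t) ^ q * (z - q * t))
      ((q * (z - t) ^ (q-1) * (-1)) * (z + q * t) + (z - t) ^ q * q
        - ((q * (z + t) ^ (q-1) * 1) * (z - q * t) + (z + t) ^ q * (-q))) t := by
    intro t
    have h1 : HasDerivAt (fun t : ℝ => (z - t) ^ q) (q * (z - t) ^ (q-1) * (-1)) t :=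
      (Real.hasDerivAt_rpow_const (Or.inr hq)).comp t ((hasDerivAt_id t).const_sub z)
    have h2 : HasDerivAt (fun t : ℝ => z + q * t) q t := by
      simpa using ((hasDerivAt_id t).const_mul q).const_add z
    have h3 : HasDerivAt (fun t : ℝ => (z + t) ^ q) (q * (z + t) ^ (q-1) * 1) t :=
      (Real.hasDerivAt_rpow_const (Or.inr hq)).comp t ((hasDerivAt_id t).const_add z)
    have h4 : HasDerivAt (fun t : ℝ => z - q * t) (-q) t := by
      simpa using ((hasDerivAt_id t).const_mul q).const_sub z
    exact (h1.mul h2).sub (h3.mul h4)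
  apply monotoneOn_of_deriv_nonneg (convex_Icc _ _)
  · apply ContinuousOn.sub
    · exact (((continuous_const.sub continuous_id).rpow_const
        (fun _ => Or.inr (by linarith))).mul
        (continuous_const.add (continuous_const.mul continuous_id))).continuousOn
    · exact (((continuous_const.add continuous_id).rpow_const
        (fun _ => Or.inr (by linarith))).mul
        (continuous_const.sub (continuous_const.mul continuous_id))).continuousOn
  · intro t ht
    exact (hD t).differentiableAt.differentiableWithinAt
  · intro t ht
    rw [interior_Icc] at ht
    obtain ⟨ht0, htz⟩ := ht
    have htz' : t < z := lt_of_lt_of_le htz (div_le_self hz hq)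
    have hzt : (0:ℝ) < z - t := by linarith
    have hzt' : (0:ℝ) < z + t := by linarith
    rw [(hD t).deriv]
    have e1 : (z - t) ^ q = (z - t) ^ (q-1) * (z - t) := by
      rw [← Real.rpow_add_one hzt.ne']; ring_nf
    have e2 : (z + t) ^ q = (z + t) ^ (q-1) * (z + t) := by
      rw [← Real.rpow_add_one hzt'.ne']; ring_nf
    have hAB : (z - t) ^ (q-1) ≤ (z + t) ^ (q-1) :=
      Real.rpow_le_rpow hzt.le (by linarith) (by linarith)
    rw [e1, e2]
    have key : (q * (z - t) ^ (q-1) * -1) * (z + q * t) + (z - t) ^ (q-1) * (z - t) * q -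
        ((q * (z + t) ^ (q-1) * 1) * (z - q * t) + (z + t) ^ (q-1) * (z + t) * -q)
        = q * (q + 1) * t * ((z + t) ^ (q-1) - (z - t) ^ (q-1)) := by ring
    rw [key]
    have : (0:ℝ) ≤ (z + t) ^ (q-1) - (z - t) ^ (q-1) := by linarith
    positivity

theorem schur_key (q : ℝ) (hq : 1 ≤ q) {x z : ℝ} (hx : 0 ≤ x) :
    0 ≤ |z + x| ^ q * (q * x - z) + |z - x| ^ q * (q * x + z) := by
  have hq0 : (0:ℝ) < q := lt_of_lt_of_le one_pos hq
  have main : ∀ z : ℝ, 0 ≤ z → 0 ≤ |z + x| ^ q * (q * x - z) + |z - x| ^ q * (q * x + z) := by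
    intro z hz
    rcases le_or_gt z (q * x) with hc | hc
    · have h1 : (0:ℝ) ≤ |z + x| ^ q := Real.rpow_nonneg (abs_nonneg _) _
      have h2 : (0:ℝ) ≤ |z - x| ^ q := Real.rpow_nonneg (abs_nonneg _) _
      have : (0:ℝ) ≤ q * x + z := by positivity
      nlinarith
    · have hxz : x < z := by
        calc x = 1 * x := (one_mul x).symm
        _ ≤ q * x := mul_le_mul_of_nonneg_right hq hx
        _ < z := hc
      have ha1 : |z + x| = z + x := abs_of_nonneg (by linarith)
      have ha2 : |z - x| = z - x := abs_of_nonneg (by linarith)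
      rw [ha1, ha2]
      have hmem0 : (0:ℝ) ∈ Set.Icc 0 (z / q) := ⟨le_refl 0, by positivity⟩
      have hmemx : x ∈ Set.Icc 0 (z / q) := ⟨hx, by rw [le_div_iff₀ hq0]; linarith [mul_comm q x]⟩
      have hmono := schur_D_mono q z hq (by linarith) hmem0 hmemx hx
      simp only [sub_zero, add_zero, mul_zero] at hmono
      -- hmono : z ^ q * z - z ^ q * z ≤ (z-x)^q * (z+q*x) - (z+x)^q*(z-q*x)
      nlinarith [hmono]
  rcases le_total 0 z with hz | hz
  · exact main z hz
  · have h := main (-z) (by linarith)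
    have e1 : (-z) + x = -(z - x) := by ring
    have e2 : (-z) - x = -(z + x) := by ring
    rw [e1, e2, abs_neg, abs_neg] at h
    linarith

theorem schur_hasDerivAt_sfn (q : ℝ) (hq : 1 ≤ q) (x : ℝ) :
    HasDerivAt (fun w : ℝ => |w| ^ q * w) ((q + 1) * |x| ^ q) x := by
  rcases lt_trichotomy x 0 with hx | hx | hx
  · have hin : HasDerivAt (fun w : ℝ => -w) (-1 : ℝ) x := (hasDerivAt_id x).neg
    have hrp : HasDerivAt (fun w : ℝ => (-w) ^ q) (q * (-x) ^ (q-1) * (-1)) x :=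
      (Real.hasDerivAt_rpow_const (Or.inl (by linarith : -x ≠ 0))).comp x hin
    have h1 : HasDerivAt (fun w : ℝ => (-w) ^ q * w)
        ((q * (-x) ^ (q-1) * (-1)) * x + (-x) ^ q * 1) x := hrp.mul (hasDerivAt_id x)
    have heq : (fun w : ℝ => |w| ^ q * w) =ᶠ[nhds x] (fun w : ℝ => (-w) ^ q * w) := by
      filter_upwards [eventually_lt_nhds hx] with w hw
      rw [abs_of_neg hw]
    have hval : (q * (-x) ^ (q-1) * (-1)) * x + (-x) ^ q * 1 = (q + 1) * |x| ^ q := by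
      rw [abs_of_neg hx]
      have : (-x) ^ q = (-x) ^ (q-1) * (-x) := by
        rw [← Real.rpow_add_one (by linarith : -x ≠ 0)]; ring_nf
      rw [this]; ring
    rw [← hval]
    exact h1.congr_of_eventuallyEq heq
  · subst hx
    rw [hasDerivAt_iff_tendsto_slope]
    have hval : (q + 1) * |(0:ℝ)| ^ q = 0 := by
      rw [abs_zero, Real.zero_rpow (by linarith : q ≠ 0), mul_zero]
    rw [hval]
    have hc : Continuous (fun w : ℝ => |w| ^ q) :=
      continuous_abs.rpow_const (fun _ => Or.inr (by linarith))
    have h0 : Tendsto (fun w : ℝ => |w| ^ q) (nhds 0) (nhds 0) := by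
      have := hc.tendsto 0
      simpa [Real.zero_rpow (by linarith : q ≠ 0)] using this
    apply (h0.mono_left nhdsWithin_le_nhds).congr'
    filter_upwards [self_mem_nhdsWithin] with w hw
    have hw0 : w ≠ 0 := hw
    simp [slope_def_field, hw0]
  · have hrp : HasDerivAt (fun w : ℝ => w ^ q) (q * x ^ (q-1)) x :=
      Real.hasDerivAt_rpow_const (Or.inl hx.ne')
    have h1 : HasDerivAt (fun w : ℝ => w ^ q * w) ((q * x ^ (q-1)) * x + x ^ q * 1) x :=
      hrp.mul (hasDerivAt_id x)
    have heq : (fun w : ℝ => |w| ^ q * w) =ᶠ[nhds x] (fun w : ℝ => w ^ q * w) := by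
      filter_upwards [eventually_gt_nhds hx] with w hw
      rw [abs_of_pos hw]
    have hval : (q * x ^ (q-1)) * x + x ^ q * 1 = (q + 1) * |x| ^ q := by
      rw [abs_of_pos hx]
      have : x ^ q = x ^ (q-1) * x := by
        rw [← Real.rpow_add_one hx.ne']; ring_nf
      rw [this]; ring
    rw [← hval]
    exact h1.congr_of_eventuallyEq heq

theorem schur_hasDerivAt_psi (p : ℝ) (hp : 3 ≤ p) (x : ℝ) :
    HasDerivAt (fun w : ℝ => |w| ^ p) (p * (|x| ^ (p-2) * x)) x := by
  have h2 : HasDerivAt (fun w : ℝ => (w^2) ^ (p/2)) ((p/2) * (x^2)^(p/2 - 1) * (2*x)) x := by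
    have hin : HasDerivAt (fun w : ℝ => w^2) (2*x) x := by
      simpa using (hasDerivAt_pow 2 x)
    exact (Real.hasDerivAt_rpow_const (Or.inr (by linarith))).comp x hin
  have habs : ∀ w : ℝ, (w^2 : ℝ) ^ (p/2) = |w| ^ p := by
    intro w
    rw [← sq_abs, ← Real.rpow_natCast |w| 2, ← Real.rpow_mul (abs_nonneg w)]
    rw [show ((2:ℕ):ℝ) * (p/2) = p by push_cast; ring]
  have habs2 : (x^2 : ℝ) ^ (p/2 - 1) = |x| ^ (p - 2) := by
    rw [← sq_abs, ← Real.rpow_natCast |x| 2, ← Real.rpow_mul (abs_nonneg x)]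
    rw [show ((2:ℕ):ℝ) * (p/2-1) = p - 2 by push_cast; ring]
  have heq : (fun w : ℝ => |w| ^ p) = (fun w : ℝ => (w^2) ^ (p/2)) := by
    funext w; rw [habs]
  rw [heq]
  have hval : (p/2) * (x^2)^(p/2 - 1) * (2*x) = p * (|x| ^ (p-2) * x) := by
    rw [habs2]; ring
  rw [← hval]
  exact h2

theorem schur_g_deriv (p : ℝ) (hp : 3 ≤ p) (z x : ℝ) :
    HasDerivAt (fun x : ℝ => |z + x| ^ (p-2) * (z + x) - |z - x| ^ (p-2) * (z - x))
      ((p-1) * |z + x| ^ (p-2) + (p-1) * |z - x| ^ (p-2)) x := by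
  have hq : (1:ℝ) ≤ p - 2 := by linarith
  have h1 := (schur_hasDerivAt_sfn (p-2) hq (z + x)).comp x ((hasDerivAt_id x).const_add z)
  have h2 := (schur_hasDerivAt_sfn (p-2) hq (z - x)).comp x ((hasDerivAt_id x).const_sub z)
  have h := h1.sub h2
  have hval : ((p-2) + 1) * |z + x| ^ (p-2) * 1 - ((p-2) + 1) * |z - x| ^ (p-2) * (-1)
      = (p-1) * |z + x| ^ (p-2) + (p-1) * |z - x| ^ (p-2) := by ring
  rw [← hval]
  exact h

theorem schur_slope_mono (p : ℝ) (hp : 3 ≤ p) (z : ℝ) :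
    MonotoneOn (fun x : ℝ =>
      (|z + x| ^ (p-2) * (z + x) - |z - x| ^ (p-2) * (z - x)) / x) (Set.Ioi 0) := by
  have hq : (1:ℝ) ≤ p - 2 := by linarith
  apply monotoneOn_of_deriv_nonneg (convex_Ioi 0)
  · apply ContinuousOn.div
    · exact fun x hx => ((schur_g_deriv p hp z x).differentiableAt.continuousAt).continuousWithinAt
    · exact continuousOn_id
    · intro x hx; exact ne_of_gt hx
  · rw [interior_Ioi]
    intro x hx
    exact (((schur_g_deriv p hp z x).div (hasDerivAt_id x) (ne_of_gt hx)).differentiableAt).differentiableWithinAt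
  · rw [interior_Ioi]
    intro x hx
    have hx0 : (0:ℝ) < x := hx
    have hd := (schur_g_deriv p hp z x).div (hasDerivAt_id x) (ne_of_gt hx0)
    simp only [id] at hd
    rw [show (fun x : ℝ => (|z + x| ^ (p-2) * (z + x) - |z - x| ^ (p-2) * (z - x)) / x) = ((fun x => |z + x| ^ (p-2) * (z + x) - |z - x| ^ (p-2) * (z - x)) / id) from rfl, hd.deriv]
    apply div_nonneg _ (by positivity)
    have hnum : ((p-1) * |z + x| ^ (p-2) + (p-1) * |z - x| ^ (p-2)) * x
        - (|z + x| ^ (p-2) * (z + x) - |z - x| ^ (p-2) * (z - x)) * 1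
        = |z + x| ^ (p-2) * ((p-2) * x - z) + |z - x| ^ (p-2) * ((p-2) * x + z) := by ring
    rw [hnum]
    exact schur_key (p-2) hq hx0.le

noncomputable def Qfun (p z w : ℝ) : ℝ := |z + w| ^ p + |z - w| ^ p

theorem schur_Q_deriv (p : ℝ) (hp : 3 ≤ p) (z w : ℝ) :
    HasDerivAt (Qfun p z)
      (p * (|z + w| ^ (p-2) * (z + w) - |z - w| ^ (p-2) * (z - w))) w := by
  have h1 := (schur_hasDerivAt_psi p hp (z + w)).comp w ((hasDerivAt_id w).const_add z)
  have h2 := (schur_hasDerivAt_psi p hp (z - w)).comp w ((hasDerivAt_id w).const_sub z)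
  have h := h1.add h2
  have hval : p * (|z + w| ^ (p-2) * (z + w)) * 1 + p * (|z - w| ^ (p-2) * (z - w)) * (-1)
      = p * (|z + w| ^ (p-2) * (z + w) - |z - w| ^ (p-2) * (z - w)) := by ring
  rw [← hval]
  exact h

theorem schur_Q_cont (p : ℝ) (hp : 3 ≤ p) (z : ℝ) : Continuous (Qfun p z) := by
  apply Continuous.add
  · exact ((continuous_const.add continuous_id).abs).rpow_const (fun _ => Or.inr (by linarith))
  · exact ((continuous_const.sub continuous_id).abs).rpow_const (fun _ => Or.inr (by linarith))

theorem schur_four_point (p : ℝ) (hp : 3 ≤ p) (z α β α' β' : ℝ)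
    (hβ0 : 0 ≤ β) (h1 : β ≤ β') (h2 : β' ≤ α') (h3 : α' ≤ α)
    (hsum : α' ^ 2 + β' ^ 2 = α ^ 2 + β ^ 2) :
    Qfun p z α' + Qfun p z β' ≤ Qfun p z α + Qfun p z β := by
  have hβ'0 : 0 ≤ β' := le_trans hβ0 h1
  have hα'0 : 0 ≤ α' := le_trans hβ'0 h2
  have hα0 : 0 ≤ α := le_trans hα'0 h3
  set M : ℝ := α ^ 2 + β ^ 2 with hM
  set ρ : ℝ → ℝ := fun t => Qfun p z (√ t) + Qfun p z (√ (M - t)) with hρ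
  have hasd : ∀ t ∈ Set.Ioo (0:ℝ) (M/2), HasDerivAt ρ
      ((p * (|z + √ t| ^ (p-2) * (z + √ t) - |z - √ t| ^ (p-2) * (z - √ t))) * (1 / (2 * √ t)) +
       (p * (|z + √ (M-t)| ^ (p-2) * (z + √ (M-t)) - |z - √ (M-t)| ^ (p-2) * (z - √ (M-t))))
         * (1 / (2 * √ (M-t))) * (-1)) t := by
    intro t ht
    obtain ⟨ht0, htM⟩ := ht
    have hMt0 : (0:ℝ) < M - t := by
      have : t < M/2 := htM
      linarith
    have hd1 : HasDerivAt (fun t : ℝ => Qfun p z (√ t))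
        ((p * (|z + √ t| ^ (p-2) * (z + √ t) - |z - √ t| ^ (p-2) * (z - √ t))) * (1 / (2 * √ t))) t :=
      (schur_Q_deriv p hp z (√ t)).comp t (Real.hasDerivAt_sqrt (ne_of_gt ht0))
    have hd2 : HasDerivAt (fun t : ℝ => Qfun p z (√ (M - t)))
        ((p * (|z + √ (M-t)| ^ (p-2) * (z + √ (M-t)) - |z - √ (M-t)| ^ (p-2) * (z - √ (M-t))))
          * (1 / (2 * √ (M-t))) * (-1)) t := by
      have inner : HasDerivAt (fun t : ℝ => M - t) (-1 : ℝ) t := (hasDerivAt_id t).const_sub M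
      have outer := (schur_Q_deriv p hp z (√ (M - t))).comp (M - t)
        (Real.hasDerivAt_sqrt (ne_of_gt hMt0))
      exact outer.comp t inner
    exact hd1.add hd2
  have hρanti : AntitoneOn ρ (Set.Icc 0 (M/2)) := by
    apply antitoneOn_of_deriv_nonpos (convex_Icc _ _)
    · apply ContinuousOn.add
      · exact ((schur_Q_cont p hp z).comp Real.continuous_sqrt).continuousOn
      · exact ((schur_Q_cont p hp z).comp
          (Real.continuous_sqrt.comp (continuous_const.sub continuous_id))).continuousOn
    · rw [interior_Icc]
      intro t ht
      exact (hasd t ht).differentiableAt.differentiableWithinAt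
    · rw [interior_Icc]
      intro t ht
      rw [(hasd t ht).deriv]
      obtain ⟨ht0, htM⟩ := ht
      have hMt0 : (0:ℝ) < M - t := by linarith
      have hst : (0:ℝ) < √ t := Real.sqrt_pos.mpr ht0
      have hsMt : (0:ℝ) < √ (M - t) := Real.sqrt_pos.mpr hMt0
      have hle : √ t ≤ √ (M - t) := Real.sqrt_le_sqrt (by linarith)
      have hm := schur_slope_mono p hp z hst hsMt hle
      set A := |z + √ t| ^ (p-2) * (z + √ t) - |z - √ t| ^ (p-2) * (z - √ t) with hA
      set B := |z + √ (M-t)| ^ (p-2) * (z + √ (M-t)) - |z - √ (M-t)| ^ (p-2) * (z - √ (M-t)) with hB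
      have e1 : p * A * (1 / (2 * √ t)) = (p / 2) * (A / √ t) := by
        field_simp
      have e2 : p * B * (1 / (2 * √ (M-t))) * (-1) = -((p / 2) * (B / √ (M-t))) := by
        field_simp
      rw [e1, e2]
      have := mul_le_mul_of_nonneg_left hm (by linarith : (0:ℝ) ≤ p / 2)
      linarith
  have hmem1 : β ^ 2 ∈ Set.Icc (0:ℝ) (M/2) := by
    constructor
    · positivity
    · have hββ' : β ^ 2 ≤ β' ^ 2 := by nlinarith
      have hβ'α' : β' ^ 2 ≤ α' ^ 2 := by nlinarith
      have : α' ^ 2 + β' ^ 2 = M := hsum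
      nlinarith
  have hmem2 : β' ^ 2 ∈ Set.Icc (0:ℝ) (M/2) := by
    constructor
    · positivity
    · have hβ'α' : β' ^ 2 ≤ α' ^ 2 := by nlinarith
      have : α' ^ 2 + β' ^ 2 = M := hsum
      nlinarith
  have hle2 : β ^ 2 ≤ β' ^ 2 := by nlinarith
  have hmain := hρanti hmem1 hmem2 hle2
  have e1 : ρ (β ^ 2) = Qfun p z α + Qfun p z β := by
    show Qfun p z (√ (β^2)) + Qfun p z (√ (M - β^2)) = _
    have hMβ : M - β ^ 2 = α ^ 2 := by rw [hM]; ring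
    rw [hMβ, Real.sqrt_sq hβ0, Real.sqrt_sq hα0]
    ring
  have e2 : ρ (β' ^ 2) = Qfun p z α' + Qfun p z β' := by
    show Qfun p z (√ (β'^2)) + Qfun p z (√ (M - β'^2)) = _
    have hMβ : M - β' ^ 2 = α' ^ 2 := by linarith [hsum, hM]
    rw [hMβ, Real.sqrt_sq hβ'0, Real.sqrt_sq hα'0]
    ring
  rw [e1, e2] at hmain
  exact hmain

theorem Qfun_neg (p z w : ℝ) : Qfun p z (-w) = Qfun p z w := by
  unfold Qfun
  rw [show z + -w = z - w by ring, show z - -w = z + w by ring]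
  ring

/-- core: assumes s ≥ t, u ≥ v -/

theorem schur_quad_core (p : ℝ) (hp : 3 ≤ p) (s t u v z : ℝ)
    (ht : 0 ≤ t) (hv : 0 ≤ v) (hts : t ≤ s) (hvu : v ≤ u)
    (hsum : s ^ 2 + t ^ 2 = u ^ 2 + v ^ 2) (hmax : s ≤ u) :
    Qfun p z (u + v) + Qfun p z (u - v) ≤ Qfun p z (s + t) + Qfun p z (s - t) := by
  have hs : 0 ≤ s := le_trans ht hts
  have hu : 0 ≤ u := le_trans hv hvu
  -- v ≤ t
  have hvt : v ≤ t := by nlinarith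
  -- product comparison
  have hprod2 : u^2 * v^2 ≤ s^2 * t^2 := by
    have e : s^2*t^2 - u^2*v^2 = (u^2 - s^2)*(s^2 - v^2) := by linear_combination (s^2) * hsum
    have f1 : s^2 ≤ u^2 := by nlinarith
    have f2 : v^2 ≤ s^2 := by nlinarith
    nlinarith [mul_nonneg (sub_nonneg.2 f1) (sub_nonneg.2 f2)]
  have hprod : u * v ≤ s * t := by nlinarith [mul_nonneg hs ht, mul_nonneg hu hv]
  -- apply four_point with α = s + t, β = s - t?? NO: α := s+t (bigger), α' := u+v, β' := u−v, β := s−t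
  have hβ0 : 0 ≤ s - t := by linarith
  have h1 : s - t ≤ u - v := by nlinarith
  have h2 : u - v ≤ u + v := by linarith
  have h3 : u + v ≤ s + t := by nlinarith [sq_nonneg (s+t), sq_nonneg (u+v)]
  have hsum4 : (u + v) ^ 2 + (u - v) ^ 2 = (s + t) ^ 2 + (s - t) ^ 2 := by nlinarith
  exact schur_four_point p hp z (s+t) (s-t) (u+v) (u-v) hβ0 h1 h2 h3 hsum4

theorem schur_quad (p : ℝ) (hp : 3 ≤ p) (s t u v z : ℝ)
    (hs : 0 ≤ s) (ht : 0 ≤ t) (hu : 0 ≤ u) (hv : 0 ≤ v)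
    (hsum : s ^ 2 + t ^ 2 = u ^ 2 + v ^ 2) (hmax : max s t ≤ max u v) :
    Qfun p z (u + v) + Qfun p z (u - v) ≤ Qfun p z (s + t) + Qfun p z (s - t) := by
  rcases le_total t s with hts | hts <;> rcases le_total v u with hvu | hvu
  · have hmax' : s ≤ u := by
      rw [max_eq_left hts, max_eq_left hvu] at hmax; exact hmax
    exact schur_quad_core p hp s t u v z ht hv hts hvu hsum hmax'
  · have hmax' : s ≤ v := by rw [max_eq_left hts, max_eq_right hvu] at hmax; exact hmax
    have := schur_quad_core p hp s t v u z ht hu hts hvu (by linarith) hmax'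
    have e1 : Qfun p z (v - u) = Qfun p z (u - v) := by
      rw [show v - u = -(u - v) by ring, Qfun_neg]
    rw [show v + u = u + v by ring, e1] at this
    exact this
  · have hmax' : t ≤ u := by rw [max_eq_right hts, max_eq_left hvu] at hmax; exact hmax
    have := schur_quad_core p hp t s u v z hs hv hts hvu (by linarith) hmax'
    have e1 : Qfun p z (t - s) = Qfun p z (s - t) := by
      rw [show t - s = -(s - t) by ring, Qfun_neg]
    rw [show t + s = s + t by ring, e1] at this
    exact this
  · have hmax' : t ≤ v := by rw [max_eq_right hts, max_eq_right hvu] at hmax; exact hmax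
    have := schur_quad_core p hp t s v u z hs hu hts hvu (by linarith) hmax'
    have e1 : Qfun p z (t - s) = Qfun p z (s - t) := by
      rw [show t - s = -(s - t) by ring, Qfun_neg]
    have e2 : Qfun p z (v - u) = Qfun p z (u - v) := by
      rw [show v - u = -(u - v) by ring, Qfun_neg]
    rw [show t + s = s + t by ring, show v + u = u + v by ring, e1, e2] at this
    exact this

def sgnB (b : Bool) : ℝ := cond b 1 (-1)

noncomputable def SW (p : ℝ) {n : ℕ} (c : Fin n → ℝ) : ℝ :=
  ∑ σ : Fin n → Bool, |∑ i, c i * sgnB (σ i)| ^ p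

theorem sum_bool_pair (p : ℝ) (A B Z : ℝ) :
    ∑ bc : Bool × Bool, |A * sgnB bc.1 + B * sgnB bc.2 + Z| ^ p
      = Qfun p Z (A + B) + Qfun p Z (A - B) := by
  rw [Fintype.sum_prod_type, Fintype.sum_bool]
  rw [Fintype.sum_bool, Fintype.sum_bool]
  simp only [sgnB, cond_true, cond_false]
  unfold Qfun
  rw [show A * 1 + B * 1 + Z = Z + (A + B) by ring,
      show A * 1 + B * (-1) + Z = Z + (A - B) by ring,
      show A * (-1) + B * 1 + Z = Z - (A - B) by ring,
      show A * (-1) + B * (-1) + Z = Z - (A + B) by ring]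
  ring

/-- decomposition equiv -/

def pairEquiv {n : ℕ} (j k : Fin n) (hjk : j ≠ k) :
    ((Bool × Bool) × ({ i : Fin n // i ≠ j ∧ i ≠ k } → Bool)) ≃ (Fin n → Bool) where
  toFun := fun x i => if h : i = j then x.1.1 else if h' : i = k then x.1.2 else x.2 ⟨i, h, h'⟩
  invFun := fun σ => ((σ j, σ k), fun i => σ i.1)
  left_inv := by
    rintro ⟨⟨b, c⟩, τ⟩
    rw [Prod.ext_iff]
    constructor
    · rw [Prod.ext_iff]
      constructor
      · show (if h : j = j then _ else _) = b
        rw [dif_pos rfl]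
      · show (if h : k = j then _ else _) = c
        rw [dif_neg (Ne.symm hjk), dif_pos rfl]
    · funext i
      show (if h : (i : Fin n) = j then _ else _) = τ i
      rw [dif_neg i.2.1, dif_neg i.2.2]
  right_inv := by
    intro σ
    funext i
    show (if h : i = j then _ else _) = σ i
    by_cases h : i = j
    · rw [dif_pos h]; subst h; rfl
    · rw [dif_neg h]
      by_cases h' : i = k
      · rw [dif_pos h']; subst h'; rfl
      · rw [dif_neg h']

theorem pairEquiv_apply_j {n : ℕ} (j k : Fin n) (hjk : j ≠ k) (bc : Bool × Bool)
    (τ : { i : Fin n // i ≠ j ∧ i ≠ k } → Bool) :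
    (pairEquiv j k hjk) (bc, τ) j = bc.1 := by
  show (if h : j = j then _ else _) = _
  rw [dif_pos rfl]

theorem pairEquiv_apply_k {n : ℕ} (j k : Fin n) (hjk : j ≠ k) (bc : Bool × Bool)
    (τ : { i : Fin n // i ≠ j ∧ i ≠ k } → Bool) :
    (pairEquiv j k hjk) (bc, τ) k = bc.2 := by
  show (if h : k = j then _ else _) = _
  rw [dif_neg (Ne.symm hjk), dif_pos rfl]

theorem pairEquiv_apply_other {n : ℕ} (j k : Fin n) (hjk : j ≠ k) (bc : Bool × Bool)
    (τ : { i : Fin n // i ≠ j ∧ i ≠ k } → Bool) (i : Fin n) (hij : i ≠ j) (hik : i ≠ k) :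
    (pairEquiv j k hjk) (bc, τ) i = τ ⟨i, hij, hik⟩ := by
  show (if h : i = j then _ else _) = _
  rw [dif_neg hij, dif_neg hik]

theorem schur_pair_step (p : ℝ) (hp : 3 ≤ p) {n : ℕ} (y y' : Fin n → ℝ) (j k : Fin n)
    (hjk : j ≠ k)
    (hy0 : ∀ i, 0 ≤ y i) (h0j : 0 ≤ y' j) (h0k : 0 ≤ y' k)
    (ho : ∀ i, i ≠ j → i ≠ k → y' i = y i)
    (hsum : y' j + y' k = y j + y k)
    (hmax : max (y' j) (y' k) ≤ max (y j) (y k)) :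
    SW p (fun i => √(y i)) ≤ SW p (fun i => √(y' i)) := by
  classical
  set e := pairEquiv j k hjk with he
  set E : Finset (Fin n) := (Finset.univ.erase j).erase k with hE
  have hkj : k ∈ Finset.univ.erase j := Finset.mem_erase.mpr ⟨Ne.symm hjk, Finset.mem_univ k⟩
  have split : ∀ (c : Fin n → ℝ) (bc : Bool × Bool) (τ : { i : Fin n // i ≠ j ∧ i ≠ k } → Bool),
      ∑ i, c i * sgnB (e (bc, τ) i)
        = c j * sgnB bc.1 + c k * sgnB bc.2
          + ∑ i ∈ E, c i * sgnB (e ((true, true), τ) i) := by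
    intro c bc τ
    rw [← Finset.add_sum_erase _ _ (Finset.mem_univ j)]
    rw [← Finset.add_sum_erase _ _ hkj]
    rw [← hE, he]
    rw [pairEquiv_apply_j j k hjk bc τ, pairEquiv_apply_k j k hjk bc τ]
    have hcong : ∀ i ∈ E, c i * sgnB ((pairEquiv j k hjk) (bc, τ) i)
        = c i * sgnB ((pairEquiv j k hjk) ((true, true), τ) i) := by
      intro i hi
      have h1 := Finset.mem_erase.mp hi
      have h2 := Finset.mem_erase.mp h1.2
      rw [pairEquiv_apply_other j k hjk bc τ i h2.1 h1.1,
          pairEquiv_apply_other j k hjk (true, true) τ i h2.1 h1.1]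
    rw [Finset.sum_congr rfl hcong]
    ring
  have key : ∀ (c : Fin n → ℝ),
      SW p c = ∑ τ : { i : Fin n // i ≠ j ∧ i ≠ k } → Bool,
        (Qfun p (∑ i ∈ E, c i * sgnB (e ((true, true), τ) i)) (c j + c k)
         + Qfun p (∑ i ∈ E, c i * sgnB (e ((true, true), τ) i)) (c j - c k)) := by
    intro c
    unfold SW
    rw [← Equiv.sum_comp e (fun σ => |∑ i, c i * sgnB (σ i)| ^ p)]
    rw [Fintype.sum_prod_type]
    rw [Finset.sum_comm]
    apply Finset.sum_congr rfl
    intro τ _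
    have hterm : ∀ bc : Bool × Bool, (bc ∈ (Finset.univ : Finset (Bool × Bool))) →
        |∑ i, c i * sgnB (e (bc, τ) i)| ^ p
        = |c j * sgnB bc.1 + c k * sgnB bc.2
            + ∑ i ∈ E, c i * sgnB (e ((true, true), τ) i)| ^ p := by
      intro bc _; rw [split c bc τ]
    rw [Finset.sum_congr rfl hterm]
    exact sum_bool_pair p (c j) (c k) _
  rw [key, key]
  apply Finset.sum_le_sum
  intro τ _
  have hZeq : ∑ i ∈ E, √(y' i) * sgnB (e ((true, true), τ) i)
      = ∑ i ∈ E, √(y i) * sgnB (e ((true, true), τ) i) := by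
    apply Finset.sum_congr rfl
    intro i hi
    have h1 := Finset.mem_erase.mp hi
    have h2 := Finset.mem_erase.mp h1.2
    rw [ho i h2.1 h1.1]
  rw [hZeq]
  apply schur_quad p hp _ _ _ _ _ (Real.sqrt_nonneg _) (Real.sqrt_nonneg _)
    (Real.sqrt_nonneg _) (Real.sqrt_nonneg _)
  · rw [Real.sq_sqrt h0j, Real.sq_sqrt h0k, Real.sq_sqrt (hy0 j), Real.sq_sqrt (hy0 k)]
    exact hsum
  · have hmono : Monotone Real.sqrt := fun a b h => Real.sqrt_le_sqrt h
    rw [← hmono.map_max, ← hmono.map_max]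
    exact hmono hmax

theorem SW_perm (p : ℝ) {n : ℕ} (c : Fin n → ℝ) (pe : Equiv.Perm (Fin n)) :
    SW p (fun i => c (pe i)) = SW p c := by
  unfold SW
  rw [← Equiv.sum_comp (Equiv.arrowCongr pe (Equiv.refl Bool))
    (fun σ => |∑ i, c i * sgnB (σ i)| ^ p)]
  apply Finset.sum_congr rfl
  intro σ _
  congr 1
  congr 1
  rw [← Equiv.sum_comp pe (fun i => c i * sgnB ((Equiv.arrowCongr pe (Equiv.refl Bool)) σ i))]
  apply Finset.sum_congr rfl
  intro i _
  congr 1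
  show sgnB (σ i) = sgnB (σ (pe.symm (pe i)))
  rw [Equiv.symm_apply_apply]

theorem SW_abs (p : ℝ) {n : ℕ} (c : Fin n → ℝ) :
    SW p (fun i => |c i|) = SW p c := by
  classical
  unfold SW
  have nn : Equiv.Perm Bool := Function.Involutive.toPerm not Bool.not_not
  set e : (Fin n → Bool) ≃ (Fin n → Bool) :=
    Equiv.piCongrRight (fun i => if c i < 0 then Function.Involutive.toPerm not Bool.not_not
      else Equiv.refl Bool) with he
  rw [← Equiv.sum_comp e (fun σ => |∑ i, c i * sgnB (σ i)| ^ p)]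
  apply Finset.sum_congr rfl
  intro σ _
  congr 2
  apply Finset.sum_congr rfl
  intro i _
  have happ : e σ i = if c i < 0 then !(σ i) else σ i := by
    show (if c i < 0 then Function.Involutive.toPerm not Bool.not_not
      else Equiv.refl Bool) (σ i) = _
    split <;> rfl
  by_cases h : c i < 0
  · show |c i| * sgnB (σ i) = c i * sgnB (e σ i)
    rw [happ, if_pos h, abs_of_neg h]
    cases σ i <;> simp [sgnB]
  · show |c i| * sgnB (σ i) = c i * sgnB (e σ i)
    rw [happ, if_neg h, abs_of_nonneg (not_lt.mp h)]

theorem strictMono_fin_le {c : ℕ} (f : Fin c → ℕ) (hf : StrictMono f) (k : Fin c) :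
    (k : ℕ) ≤ f k := by
  obtain ⟨v, hv⟩ := k
  induction v with
  | zero => exact Nat.zero_le _
  | succ w ih =>
    have hw : w < c := Nat.lt_of_succ_lt hv
    have h1 : w ≤ f ⟨w, hw⟩ := by simpa using ih hw
    have h2 : f ⟨w, hw⟩ < f ⟨w+1, hv⟩ := hf (by simp [Fin.lt_def])
    simp only [Fin.val_mk]
    omega

/-- sum over any finset is at most the prefix sum for an antitone nonneg vector -/

theorem sum_le_prefix {n : ℕ} (y : Fin n → ℝ) (hy0 : ∀ i, 0 ≤ y i) (hya : Antitone y)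
    (C : Finset (Fin n)) (m : ℕ) (hm : C.card ≤ m) :
    ∑ i ∈ C, y i ≤ ∑ i ∈ Finset.univ.filter (fun i : Fin n => (i : ℕ) < m), y i := by
  classical
  have hcn : C.card ≤ n := by
    have := Finset.card_le_univ C
    simpa using this
  set e := C.orderIsoOfFin (rfl : C.card = C.card) with he
  have step1 : ∑ i ∈ C, y i = ∑ k : Fin C.card, y (e k) := by
    rw [← Finset.sum_coe_sort C y]
    exact (Equiv.sum_comp e.toEquiv (fun x => y x)).symm
  have hsm : StrictMono (fun k : Fin C.card => ((e k : Fin n) : ℕ)) := by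
    intro k1 k2 hk
    have := e.strictMono hk
    exact this
  have step2 : ∀ k : Fin C.card, y (e k) ≤ y (⟨k, lt_of_lt_of_le k.2 hcn⟩ : Fin n) := by
    intro k
    apply hya
    show (⟨k, _⟩ : Fin n) ≤ (e k : Fin n)
    rw [Fin.le_def]
    exact strictMono_fin_le _ hsm k
  have step3 : ∑ k : Fin C.card, y (⟨k, lt_of_lt_of_le k.2 hcn⟩ : Fin n)
      = ∑ i ∈ (Finset.univ : Finset (Fin C.card)).image
          (fun k : Fin C.card => (⟨k, lt_of_lt_of_le k.2 hcn⟩ : Fin n)), y i := by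
    rw [Finset.sum_image]
    intro a _ b _ hab
    have hv : (a : ℕ) = (b : ℕ) := by
      have := congrArg Fin.val hab
      simpa using this
    exact Fin.ext hv
  have step4 : ((Finset.univ : Finset (Fin C.card)).image
      (fun k : Fin C.card => (⟨k, lt_of_lt_of_le k.2 hcn⟩ : Fin n)))
      ⊆ Finset.univ.filter (fun i : Fin n => (i : ℕ) < m) := by
    intro i hi
    rw [Finset.mem_image] at hi
    obtain ⟨k, -, hk⟩ := hi
    rw [Finset.mem_filter]
    refine ⟨Finset.mem_univ i, ?_⟩
    rw [← hk]
    exact lt_of_lt_of_le k.2 hm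
  calc ∑ i ∈ C, y i = ∑ k : Fin C.card, y (e k) := step1
    _ ≤ ∑ k : Fin C.card, y (⟨k, lt_of_lt_of_le k.2 hcn⟩ : Fin n) :=
        Finset.sum_le_sum (fun k _ => step2 k)
    _ = _ := step3
    _ ≤ _ := Finset.sum_le_sum_of_subset_of_nonneg step4 (fun i _ _ => hy0 i)

theorem schur_main_ind (p : ℝ) (hp : 3 ≤ p) {n : ℕ} (N : ℕ) :
    ∀ (x y : Fin n → ℝ),
    (Finset.univ.filter (fun i => x i ≠ y i)).card ≤ N →
    (∀ i, 0 ≤ x i) → (∀ i, 0 ≤ y i) → Antitone x →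
    (∀ m : ℕ, ∑ i ∈ Finset.univ.filter (fun i : Fin n => (i:ℕ) < m), x i
        ≤ ∑ i ∈ Finset.univ.filter (fun i : Fin n => (i:ℕ) < m), y i) →
    (∑ i, x i = ∑ i, y i) →
    SW p (fun i => √(y i)) ≤ SW p (fun i => √(x i)) := by
  classical
  induction N with
  | zero =>
    intro x y hcard hx0 hy0 hxa hpre htot
    have hempty : (Finset.univ.filter (fun i => x i ≠ y i)) = ∅ :=
      Finset.card_eq_zero.mp (Nat.le_zero.mp hcard)
    have hall : ∀ i, x i = y i := by
      intro i
      by_contra h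
      have : i ∈ Finset.univ.filter (fun i => x i ≠ y i) :=
        Finset.mem_filter.mpr ⟨Finset.mem_univ i, h⟩
      rw [hempty] at this
      exact absurd this (Finset.notMem_empty i)
    have : (fun i => √(y i)) = (fun i => √(x i)) := by
      funext i; rw [hall i]
    rw [this]
  | succ N ih =>
    intro x y hcard hx0 hy0 hxa hpre htot
    by_cases hxy : ∀ i, x i = y i
    · have : (fun i => √(y i)) = (fun i => √(x i)) := by
        funext i; rw [hxy i]
      rw [this]
    · -- find j
      push_neg at hxy
      set Mset := Finset.univ.filter (fun i => x i ≠ y i) with hMset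
      have hMne : Mset.Nonempty := by
        obtain ⟨i, hi⟩ := hxy
        exact ⟨i, Finset.mem_filter.mpr ⟨Finset.mem_univ i, hi⟩⟩
      set j := Mset.min' hMne with hj
      have hjM : x j ≠ y j := (Finset.mem_filter.mp (Mset.min'_mem hMne)).2
      have hmin : ∀ i, x i ≠ y i → j ≤ i := fun i hi =>
        Finset.min'_le Mset i (Finset.mem_filter.mpr ⟨Finset.mem_univ i, hi⟩)
      have hlow : ∀ i, i < j → x i = y i := by
        intro i hij
        by_contra h
        exact absurd (hmin i h) (not_le.mpr hij)
      -- x j < y j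
      have hfil : Finset.univ.filter (fun i : Fin n => (i:ℕ) < (j:ℕ)+1)
          = insert j (Finset.univ.filter (fun i : Fin n => (i:ℕ) < (j:ℕ))) := by
        ext i
        simp only [Finset.mem_filter, Finset.mem_insert, Finset.mem_univ, true_and, Fin.ext_iff]
        omega
      have hjnot : j ∉ Finset.univ.filter (fun i : Fin n => (i:ℕ) < (j:ℕ)) := by
        simp
      have hEqlow : ∑ i ∈ Finset.univ.filter (fun i : Fin n => (i:ℕ) < (j:ℕ)), x i
          = ∑ i ∈ Finset.univ.filter (fun i : Fin n => (i:ℕ) < (j:ℕ)), y i := by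
        apply Finset.sum_congr rfl
        intro i hi
        exact hlow i (Fin.lt_def.mpr (Finset.mem_filter.mp hi).2)
      have hxjyj : x j < y j := by
        have h1 := hpre ((j:ℕ)+1)
        rw [hfil, Finset.sum_insert hjnot, Finset.sum_insert hjnot, hEqlow] at h1
        cases lt_or_eq_of_le (by linarith : x j ≤ y j) with
        | inl h => exact h
        | inr h => exact absurd h hjM
      -- find k
      set Sset := Finset.univ.filter (fun i => j < i ∧ y i < x i) with hSset
      have hSne : Sset.Nonempty := by
        by_contra hSe
        rw [Finset.not_nonempty_iff_eq_empty] at hSe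
        have hnone : ∀ i, ¬(j < i ∧ y i < x i) := by
          intro i hi
          have : i ∈ Sset := Finset.mem_filter.mpr ⟨Finset.mem_univ i, hi⟩
          rw [hSe] at this
          exact absurd this (Finset.notMem_empty i)
        have hpos : 0 < ∑ i, (y i - x i) := by
          apply Finset.sum_pos' 
          · intro i _
            rcases lt_trichotomy i j with h | h | h
            · rw [hlow i h]; simp
            · subst h; linarith
            · have := hnone i
              push_neg at this
              have := this h
              linarith
          · exact ⟨j, Finset.mem_univ j, by linarith⟩
        rw [Finset.sum_sub_distrib] at hpos
        linarith
      set k := Sset.min' hSne with hk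
      have hkS : j < k ∧ y k < x k := (Finset.mem_filter.mp (Sset.min'_mem hSne)).2
      have hmid : ∀ i, j < i → i < k → x i ≤ y i := by
        intro i h1 h2
        by_contra h
        push_neg at h
        have : i ∈ Sset := Finset.mem_filter.mpr ⟨Finset.mem_univ i, h1, h⟩
        exact absurd (Finset.min'_le Sset i this) (not_le.mpr h2)
      have hjk : j ≠ k := ne_of_lt hkS.1
      set δ := min (y j - x j) (x k - y k) with hδdef
      have hδ : 0 < δ := lt_min (by linarith) (by linarith [hkS.2])
      have hδ1 : δ ≤ y j - x j := min_le_left _ _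
      have hδ2 : δ ≤ x k - y k := min_le_right _ _
      set y' := Function.update (Function.update y j (y j - δ)) k (y k + δ) with hy'def
      have y'j : y' j = y j - δ := by
        rw [hy'def, Function.update_of_ne hjk, Function.update_self]
      have y'k : y' k = y k + δ := by
        rw [hy'def, Function.update_self]
      have y'o : ∀ i, i ≠ j → i ≠ k → y' i = y i := by
        intro i h1 h2
        rw [hy'def, Function.update_of_ne h2, Function.update_of_ne h1]
      have hxkj : x k ≤ x j := hxa (le_of_lt hkS.1)
      have hy'0 : ∀ i, 0 ≤ y' i := by
        intro i
        by_cases h1 : i = j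
        · subst h1; rw [y'j]; linarith [hx0 j]
        · by_cases h2 : i = k
          · subst h2; rw [y'k]; linarith [hy0 k]
          · rw [y'o i h1 h2]; exact hy0 i
      have step1 : SW p (fun i => √(y i)) ≤ SW p (fun i => √(y' i)) := by
        apply schur_pair_step p hp y y' j k hjk hy0
        · rw [y'j]; linarith [hx0 j]
        · rw [y'k]; linarith [hy0 k]
        · exact y'o
        · rw [y'j, y'k]; ring
        · rw [y'j, y'k]
          apply max_le
          · exact le_trans (by linarith) (le_max_left (y j) (y k))
          · exact le_trans (by linarith) (le_max_left (y j) (y k))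
      -- sums over sets containing both j and k are preserved
      have hsum_both : ∀ s : Finset (Fin n), j ∈ s → k ∈ s →
          ∑ i ∈ s, y' i = ∑ i ∈ s, y i := by
        intro s hjs hks
        have hkse : k ∈ s.erase j := Finset.mem_erase.mpr ⟨Ne.symm hjk, hks⟩
        rw [← Finset.add_sum_erase s y' hjs, ← Finset.add_sum_erase s y hjs,
            ← Finset.add_sum_erase _ y' hkse, ← Finset.add_sum_erase _ y hkse]
        have hrest : ∑ i ∈ (s.erase j).erase k, y' i = ∑ i ∈ (s.erase j).erase k, y i := by
          apply Finset.sum_congr rfl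
          intro i hi
          have h1 := Finset.mem_erase.mp hi
          have h2 := Finset.mem_erase.mp h1.2
          exact y'o i h2.1 h1.1
        rw [hrest, y'j, y'k]
        ring
      have step2 : SW p (fun i => √(y' i)) ≤ SW p (fun i => √(x i)) := by
        apply ih x y' _ hx0 hy'0 hxa _ _
        · -- card bound
          have hsub : Finset.univ.filter (fun i => x i ≠ y' i) ⊆ Mset := by
            intro i hi
            have hi' := (Finset.mem_filter.mp hi).2
            rw [hMset, Finset.mem_filter]
            refine ⟨Finset.mem_univ i, ?_⟩
            by_cases h1 : i = j
            · subst h1; exact hjM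
            · by_cases h2 : i = k
              · subst h2; exact ne_of_gt hkS.2
              · rw [y'o i h1 h2] at hi'; exact hi'
          have hw : ∃ w, x w ≠ y w ∧ x w = y' w := by
            rcases le_total (y j - x j) (x k - y k) with hc | hc
            · exact ⟨j, hjM, by rw [y'j, hδdef, min_eq_left hc]; ring⟩
            · exact ⟨k, ne_of_gt hkS.2, by rw [y'k, hδdef, min_eq_right hc]; ring⟩
          obtain ⟨w, hw1, hw2⟩ := hw
          have hss : Finset.univ.filter (fun i => x i ≠ y' i) ⊂ Mset := by
            rw [Finset.ssubset_iff_of_subset hsub]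
            refine ⟨w, Finset.mem_filter.mpr ⟨Finset.mem_univ w, hw1⟩, ?_⟩
            intro hmem
            exact (Finset.mem_filter.mp hmem).2 hw2
          have := Finset.card_lt_card hss
          omega
        · -- prefix sums
          intro m
          set Pm := Finset.univ.filter (fun i : Fin n => (i:ℕ) < m) with hPm
          by_cases hjm : (j:ℕ) < m
          · have hjmem : j ∈ Pm := Finset.mem_filter.mpr ⟨Finset.mem_univ j, hjm⟩
            by_cases hkm : (k:ℕ) < m
            · have hkmem : k ∈ Pm := Finset.mem_filter.mpr ⟨Finset.mem_univ k, hkm⟩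
              rw [hsum_both Pm hjmem hkmem]
              exact hpre m
            · -- j in, k out
              have hmk : m ≤ (k:ℕ) := not_lt.mp hkm
              have hEy' : ∑ i ∈ Pm, y' i = ∑ i ∈ Pm, y i - δ := by
                rw [← Finset.add_sum_erase Pm y' hjmem, ← Finset.add_sum_erase Pm y hjmem]
                have hrest : ∑ i ∈ Pm.erase j, y' i = ∑ i ∈ Pm.erase j, y i := by
                  apply Finset.sum_congr rfl
                  intro i hi
                  have h1 := Finset.mem_erase.mp hi
                  have h2 : i ≠ k := by
                    intro h
                    subst h
                    have := (Finset.mem_filter.mp h1.2).2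
                    omega
                  exact y'o i h1.1 h2
                rw [hrest, y'j]
                ring
              rw [hEy']
              have hnn : ∀ i ∈ Pm, 0 ≤ y i - x i := by
                intro i hi
                have him : (i:ℕ) < m := (Finset.mem_filter.mp hi).2
                rcases lt_trichotomy i j with h | h | h
                · rw [hlow i h]; simp
                · subst h; linarith
                · have hik : i < k := Fin.lt_def.mpr (by omega)
                  have := hmid i h hik
                  linarith
              have hgap : y j - x j ≤ ∑ i ∈ Pm, (y i - x i) :=
                Finset.single_le_sum hnn hjmem
              rw [Finset.sum_sub_distrib] at hgap
              have := hpre m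
              rw [← hPm] at this
              linarith
          · -- j out, k out
            have hmj : m ≤ (j:ℕ) := not_lt.mp hjm
            have hEy' : ∑ i ∈ Pm, y' i = ∑ i ∈ Pm, y i := by
              apply Finset.sum_congr rfl
              intro i hi
              have him : (i:ℕ) < m := (Finset.mem_filter.mp hi).2
              have h1 : i ≠ j := by
                intro h; subst h; omega
              have h2 : i ≠ k := by
                intro h; subst h
                have : (j:ℕ) < (k:ℕ) := Fin.lt_def.mp hkS.1
                omega
              exact y'o i h1 h2
            rw [hEy']
            exact hpre m
        · -- total
          rw [htot, hsum_both Finset.univ (Finset.mem_univ j) (Finset.mem_univ k)]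
      exact le_trans step1 step2

instance rademacherLaw_prob : IsProbabilityMeasure rademacherLaw := by
  constructor
  rw [rademacherLaw]
  simp [Measure.dirac_apply' _ MeasurableSet.univ]
  rw [← two_mul, ENNReal.mul_inv_cancel (by norm_num) (by norm_num)]

theorem rademacher_joint (n : ℕ) (Ω : Type) [MeasureSpace Ω]
    [IsProbabilityMeasure (ℙ : Measure Ω)]
    (ε : Fin n → Ω → ℝ) (hmeas : ∀ i, Measurable (ε i))
    (hlaw : ∀ i, Measure.map (ε i) ℙ = rademacherLaw)
    (hindep : iIndepFun ε ℙ) :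
    Measure.map (fun ω i => ε i ω) ℙ = Measure.pi (fun _ : Fin n => rademacherLaw) := by
  symm
  apply Measure.pi_eq
  intro s hs
  rw [Measure.map_apply (measurable_pi_lambda _ hmeas) (MeasurableSet.univ_pi hs)]
  have hpre : (fun ω i => ε i ω) ⁻¹' (Set.univ.pi s) = ⋂ i ∈ Finset.univ, ε i ⁻¹' s i := by
    ext ω
    simp [Set.mem_pi]
  rw [hpre]
  rw [hindep.measure_inter_preimage_eq_mul Finset.univ (fun i _ => hs i)]
  apply Finset.prod_congr rfl
  intro i _
  rw [← Measure.map_apply (hmeas i) (hs i), hlaw i]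

theorem rademacher_pi_eq_mix (n : ℕ) :
    Measure.pi (fun _ : Fin n => rademacherLaw)
      = ((2:ENNReal)⁻¹)^n • ∑ σ : Fin n → Bool, Measure.dirac (fun i => sgnB (σ i)) := by
  classical
  apply Measure.pi_eq
  intro s hs
  rw [Measure.smul_apply, Measure.finset_sum_apply]
  have hterm : ∀ σ : Fin n → Bool,
      Measure.dirac (fun i => sgnB (σ i)) (Set.univ.pi s)
        = ∏ i, (if sgnB (σ i) ∈ s i then (1:ENNReal) else 0) := by
    intro σ
    rw [Measure.dirac_apply' _ (MeasurableSet.univ_pi hs)]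
    rw [Set.indicator_apply]
    simp only [Set.mem_univ_pi, Pi.one_apply]
    rw [Fintype.prod_boole]
    congr
  rw [Finset.sum_congr rfl (fun σ _ => hterm σ)]
  rw [← Fintype.piFinset_univ,
    ← Finset.prod_univ_sum (fun _ => (Finset.univ : Finset Bool))
      (fun i b => if sgnB b ∈ s i then (1:ENNReal) else 0)]
  have hfac : ∀ i : Fin n, ∑ b : Bool, (if sgnB b ∈ s i then (1:ENNReal) else 0)
      = (if (1:ℝ) ∈ s i then (1:ENNReal) else 0) + (if (-1:ℝ) ∈ s i then (1:ENNReal) else 0) := by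
    intro i
    rw [Fintype.sum_bool]
    simp [sgnB]
    congr
  rw [Finset.prod_congr rfl (fun i _ => hfac i)]
  have hrad : ∀ i : Fin n, rademacherLaw (s i)
      = 2⁻¹ * ((if (1:ℝ) ∈ s i then (1:ENNReal) else 0) + (if (-1:ℝ) ∈ s i then (1:ENNReal) else 0)) := by
    intro i
    rw [rademacherLaw]
    simp only [Measure.add_apply, Measure.smul_apply, smul_eq_mul]
    rw [Measure.dirac_apply' _ (hs i), Measure.dirac_apply' _ (hs i)]
    rw [Set.indicator_apply, Set.indicator_apply]
    simp only [Pi.one_apply]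
    rw [one_div, mul_add]
  rw [Finset.prod_congr rfl (fun i _ => hrad i)]
  rw [Finset.prod_mul_distrib]
  simp [Finset.prod_const]

theorem schur_integral_eq (p : ℝ) (hp : 3 ≤ p) (n : ℕ) (Ω : Type) [MeasureSpace Ω]
    [IsProbabilityMeasure (ℙ : Measure Ω)]
    (ε : Fin n → Ω → ℝ) (hmeas : ∀ i, Measurable (ε i))
    (hlaw : ∀ i, Measure.map (ε i) ℙ = rademacherLaw)
    (hindep : iIndepFun ε ℙ) (c : Fin n → ℝ) :
    ∫ ω, |∑ i, c i * ε i ω| ^ p ∂ℙ = (2:ℝ)⁻¹^n * SW p c := by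
  have hp0 : (0:ℝ) ≤ p := by linarith
  set f : (Fin n → ℝ) → ℝ := fun v => |∑ i, c i * v i| ^ p with hf_def
  have hf : Continuous f := by
    apply Continuous.rpow_const
    · apply Continuous.abs
      apply continuous_finset_sum
      intro i _
      exact continuous_const.mul (continuous_apply i)
    · exact fun _ => Or.inr hp0
  have h1 : ∫ ω, |∑ i, c i * ε i ω| ^ p ∂ℙ = ∫ ω, f (fun i => ε i ω) ∂ℙ := rfl
  have hT : Measurable (fun ω i => ε i ω) := measurable_pi_lambda _ hmeas
  have h2 : ∫ ω, f (fun i => ε i ω) ∂ℙ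
      = ∫ v, f v ∂(Measure.map (fun ω i => ε i ω) ℙ) :=
    (integral_map hT.aemeasurable hf.aestronglyMeasurable).symm
  have h3 := rademacher_joint n Ω ε hmeas hlaw hindep
  have h4 := rademacher_pi_eq_mix n
  rw [h1, h2, h3, h4]
  rw [integral_smul_measure]
  have hint : ∀ σ : Fin n → Bool,
      Integrable f (Measure.dirac (fun i => sgnB (σ i))) := by
    intro σ
    refine ⟨hf.aestronglyMeasurable, ?_⟩
    rw [HasFiniteIntegral]
    have hm : Measurable (fun v => ‖f v‖ₑ) :=
      hf.measurable.enorm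
    rw [lintegral_dirac' _ hm]
    exact ENNReal.coe_lt_top
  rw [integral_finset_sum_measure (fun σ _ => hint σ)]
  have h5 : ∀ σ : Fin n → Bool, ∫ v, f v ∂(Measure.dirac (fun i => sgnB (σ i)))
      = f (fun i => sgnB (σ i)) :=
    fun σ => integral_dirac' f _ hf.stronglyMeasurable
  rw [Finset.sum_congr rfl (fun σ _ => h5 σ)]
  have h6 : ((2:ENNReal)⁻¹ ^ n).toReal = (2:ℝ)⁻¹ ^ n := by
    rw [ENNReal.toReal_pow, ENNReal.toReal_inv]
    norm_num
  rw [h6]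
  rfl

/-- **Schur monotonicity of p-th moments of Rademacher sums, p ≥ 3.** -/
theorem schur_monotone_moment (p : ℝ) (hp : 3 ≤ p)
    (n : ℕ) (Ω : Type) [MeasureSpace Ω] [IsProbabilityMeasure (ℙ : Measure Ω)]
    (ε : Fin n → Ω → ℝ)
    (hmeas : ∀ i, Measurable (ε i))
    (hlaw : ∀ i, Measure.map (ε i) ℙ = rademacherLaw)
    (hindep : iIndepFun ε ℙ)
    (a b : Fin n → ℝ)
    (ha : ∑ i, (a i) ^ 2 = 1) (hb : ∑ i, (b i) ^ 2 = 1)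
    (hmaj : IsMajorizedBy (fun i => (a i) ^ 2) (fun i => (b i) ^ 2)) :
    ∫ ω, |∑ i, b i * ε i ω| ^ p ∂ℙ ≤ ∫ ω, |∑ i, a i * ε i ω| ^ p ∂ℙ := by
  classical
  -- sorted squared vectors
  set pa := Tuple.sort (fun i => -((a i) ^ 2)) with hpa
  set pb := Tuple.sort (fun i => -((b i) ^ 2)) with hpb
  set x : Fin n → ℝ := fun i => (a (pa i)) ^ 2 with hx
  set y : Fin n → ℝ := fun i => (b (pb i)) ^ 2 with hy
  have hxa : Antitone x := by
    intro i j hij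
    have := Tuple.monotone_sort (fun i => -((a i) ^ 2)) hij
    simp only [Function.comp_apply] at this
    rw [hx]
    simp only []
    linarith
  have hya : Antitone y := by
    intro i j hij
    have := Tuple.monotone_sort (fun i => -((b i) ^ 2)) hij
    simp only [Function.comp_apply] at this
    rw [hy]
    simp only []
    linarith
  have hx0 : ∀ i, 0 ≤ x i := fun i => sq_nonneg _
  have hy0 : ∀ i, 0 ≤ y i := fun i => sq_nonneg _
  -- prefix majorization
  have hpre : ∀ m : ℕ, ∑ i ∈ Finset.univ.filter (fun i : Fin n => (i:ℕ) < m), x i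
      ≤ ∑ i ∈ Finset.univ.filter (fun i : Fin n => (i:ℕ) < m), y i := by
    intro m
    set Pm := Finset.univ.filter (fun i : Fin n => (i:ℕ) < m) with hPm
    have hcardPm : Pm.card ≤ m := by
      have : Pm.card ≤ (Finset.range m).card :=
        Finset.card_le_card_of_injOn (fun i => (i:ℕ))
          (fun i hi => Finset.mem_range.mpr (Finset.mem_filter.mp hi).2)
          (fun i _ j _ hij => Fin.ext hij)
      rwa [Finset.card_range] at this
    have e1 : ∑ i ∈ Pm, x i = ∑ i ∈ Pm.image pa, (a i) ^ 2 := by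
      rw [Finset.sum_image (fun i _ j _ h => pa.injective h)]
    obtain ⟨B, hBcard, hBle⟩ := hmaj (Pm.image pa)
    have e2 : ∑ i ∈ B, (b i) ^ 2 = ∑ i ∈ B.image pb.symm, y i := by
      rw [Finset.sum_image (fun i _ j _ h => pb.symm.injective h)]
      apply Finset.sum_congr rfl
      intro i _
      rw [hy]
      simp only []
      rw [Equiv.apply_symm_apply]
    have hcardC : (B.image pb.symm).card ≤ m := by
      rw [Finset.card_image_of_injective _ pb.symm.injective, hBcard,
          Finset.card_image_of_injective _ pa.injective]
      exact hcardPm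
    calc ∑ i ∈ Pm, x i = ∑ i ∈ Pm.image pa, (a i) ^ 2 := e1
      _ ≤ ∑ i ∈ B, (b i) ^ 2 := hBle
      _ = ∑ i ∈ B.image pb.symm, y i := e2
      _ ≤ ∑ i ∈ Pm, y i := sum_le_prefix y hy0 hya _ m hcardC
  have htot : ∑ i, x i = ∑ i, y i := by
    rw [hx, hy]
    rw [Equiv.sum_comp pa (fun i => (a i)^2), Equiv.sum_comp pb (fun i => (b i)^2)]
    rw [ha, hb]
  -- main inequality at SW level
  have hSW := schur_main_ind p hp ((Finset.univ.filter (fun i => x i ≠ y i)).card)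
    x y le_rfl hx0 hy0 hxa hpre htot
  -- identify SW values
  have hident : ∀ c : Fin n → ℝ, ∀ pe : Equiv.Perm (Fin n),
      SW p (fun i => √((c (pe i))^2)) = SW p c := by
    intro c pe
    have : (fun i => √((c (pe i))^2)) = fun i => |c (pe i)| := by
      funext i
      rw [Real.sqrt_sq_eq_abs]
    rw [this]
    calc SW p (fun i => |c (pe i)|) = SW p (fun j => |c j|) := SW_perm p (fun j => |c j|) pe
      _ = SW p c := SW_abs p c
  have hSWb : SW p (fun i => √(y i)) = SW p b := by
    rw [hy]; exact hident b pb
  have hSWa : SW p (fun i => √(x i)) = SW p a := by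
    rw [hx]; exact hident a pa
  rw [schur_integral_eq p hp n Ω ε hmeas hlaw hindep b,
      schur_integral_eq p hp n Ω ε hmeas hlaw hindep a]
  apply mul_le_mul_of_nonneg_left _ (by positivity)
  rw [← hSWa, ← hSWb]
  exact hSW
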